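/- Let (A, ∘, ρ, ⟨·,·⟩) be a Courant algebroid and N a (1,1)-tensor with Δ = N + N*. If Δ commutes with left multiplication (X∘ΔZ = Δ(X∘Z)) and Δ(Y∘Y) = ΔY∘Y for all Y, then the contracted structure satisfies both Courant axioms: ρ(NX)⟨Y,Y⟩ = 2⟨X, Y∘_N Y⟩ and ρ(NX)⟨Y,Y⟩ = 2⟨X∘_N Y, Y⟩ for all X, Y. Conversely, if both contracted axioms hold for all X, Y, then Δ commutes with left multiplication and Δ(Y∘Y) = ΔY∘Y. -/
import Mathlib

private lemma two_smul_cancel' {G : Type*} [AddCommGroup G] [Module ℝ G] {v w : G}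
    (h : (2:ℝ) • v = (2:ℝ) • w) : v = w := by
  have := congrArg (fun x => (2:ℝ)⁻¹ • x) h
  simpa [smul_smul] using this

theorem delta_conditions_iff_contracted_axioms
    {A F : Type*} [AddCommGroup A] [Module ℝ A] [AddCommGroup F] [Module ℝ F]
    (m : A →ₗ[ℝ] A →ₗ[ℝ] A)           -- the Leibniz product ∘
    (B : A →ₗ[ℝ] A →ₗ[ℝ] F)           -- the pairing ⟨·,·⟩
    (ρ : A →ₗ[ℝ] F →ₗ[ℝ] F)           -- the anchor acting on scalars
    (jacobi : ∀ X Y Z : A, m (m X Y) Z = m X (m Y Z) - m Y (m X Z))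
    (hsym : ∀ X Y : A, B X Y = B Y X)
    (hnondeg : ∀ a : A, (∀ b : A, B a b = 0) → a = 0)
    (h4 : ∀ X Y : A, ρ X (B Y Y) = (2 : ℝ) • B X (m Y Y))
    (h5 : ∀ X Y : A, ρ X (B Y Y) = (2 : ℝ) • B (m X Y) Y)
    (N Ns : A →ₗ[ℝ] A)
    (hadj : ∀ X Y : A, B (N X) Y = B X (Ns Y))
    (Δ : A →ₗ[ℝ] A) (hΔ : Δ = N + Ns)
    (cN : A → A → A)
    (hcN : ∀ X Y : A, cN X Y = m (N X) Y + m X (N Y) - N (m X Y)) :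
    ((∀ X Z : A, m X (Δ Z) = Δ (m X Z)) ∧ (∀ Y : A, Δ (m Y Y) = m (Δ Y) Y)) ↔
    ((∀ X Y : A, ρ (N X) (B Y Y) = (2 : ℝ) • B X (cN Y Y)) ∧
     (∀ X Y : A, ρ (N X) (B Y Y) = (2 : ℝ) • B (cN X Y) Y)) := by
  have Bcancel : ∀ v w : A, (∀ X : A, B X v = B X w) → v = w := by
    intro v w h
    have h0 : v - w = 0 := hnondeg _ (fun b => by
      rw [hsym, map_sub, h b, sub_self])
    exact sub_eq_zero.mp h0
  -- polarized axiom 5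
  have P5 : ∀ X Y Z : A, ρ X (B Y Z) = B (m X Y) Z + B (m X Z) Y := by
    intro X Y Z
    apply two_smul_cancel'
    have h1 := h5 X (Y + Z)
    have h2 := h5 X Y
    have h3 := h5 X Z
    simp only [map_add, LinearMap.add_apply] at h1
    rw [hsym Z Y] at h1
    linear_combination (norm := module) h1 - h2 - h3
  -- polarized axiom 4
  have P4 : ∀ X Y Z : A, ρ X (B Y Z) = B X (m Y Z) + B X (m Z Y) := by
    intro X Y Z
    apply two_smul_cancel'
    have h1 := h4 X (Y + Z)
    have h2 := h4 X Y
    have h3 := h4 X Z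
    simp only [map_add, LinearMap.add_apply] at h1
    rw [hsym Z Y] at h1
    linear_combination (norm := module) h1 - h2 - h3
  -- symmetrization identity
  have S : ∀ Y : A, m (Δ Y) Y + m Y (Δ Y) = (2:ℝ) • (m (N Y) Y + m Y (N Y)) := by
    intro Y
    apply Bcancel
    intro X
    have e1 : B X (m (Δ Y) Y + m Y (Δ Y)) = ρ X (B (Δ Y) Y) := by
      rw [map_add]; exact (P4 X (Δ Y) Y).symm
    have e2 : B (Δ Y) Y = (2:ℝ) • B (N Y) Y := by
      rw [hΔ]
      simp only [LinearMap.add_apply, map_add]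
      rw [hsym (Ns Y) Y, ← hadj]
      module
    have e3 : B X ((2:ℝ) • (m (N Y) Y + m Y (N Y))) = (2:ℝ) • ρ X (B (N Y) Y) := by
      rw [map_smul, map_add, P4 X (N Y) Y]
    rw [e1, e2, map_smul, e3]
  -- key lemma A
  have lemA : ∀ X Y Z : A,
      B (m X (Δ Z) - Δ (m X Z)) Y =
      (B (m X (N Y)) Z + B (m X (N Z)) Y) - (B (m X Y) (Ns Z) + B (m X Z) (Ns Y)) := by
    intro X Y Z
    have e1 : B (m X (N Y)) Z = ρ X (B (N Y) Z) - B (m X Z) (N Y) := by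
      rw [P5 X (N Y) Z]; abel
    have e2 : B (m X Y) (Ns Z) = ρ X (B Y (Ns Z)) - B (m X (Ns Z)) Y := by
      rw [P5 X Y (Ns Z)]; abel
    have e3 : B (N Y) Z = B Y (Ns Z) := hadj Y Z
    have e4 : B (m X Z) (N Y) = B (Ns (m X Z)) Y := by
      rw [hsym, hadj, hsym]
    have e5 : B (m X Z) (Ns Y) = B (N (m X Z)) Y := (hadj (m X Z) Y).symm
    rw [hΔ]
    simp only [LinearMap.add_apply, map_add, map_sub, LinearMap.sub_apply]
    rw [e1, e2, e3, e4, e5]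
    abel
  -- (II) is equivalent to condition (a)
  have aToII : (∀ X Z : A, m X (Δ Z) = Δ (m X Z)) →
      ∀ X Y : A, B (m X (N Y)) Y = B (N (m X Y)) Y := by
    intro ha X Y
    have h0 := lemA X Y Y
    rw [ha X Y, sub_self, map_zero, LinearMap.zero_apply] at h0
    rw [← hadj (m X Y) Y] at h0
    apply two_smul_cancel'
    linear_combination (norm := module) -h0
  have IIToA : (∀ X Y : A, B (m X (N Y)) Y = B (N (m X Y)) Y) →
      ∀ X Z : A, m X (Δ Z) = Δ (m X Z) := by
    intro hII X Z
    have h0 : ∀ Y : A, B (m X (Δ Z) - Δ (m X Z)) Y = 0 := by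
      intro Y
      rw [lemA X Y Z]
      have p1 := hII X (Y + Z)
      have p2 := hII X Y
      have p3 := hII X Z
      simp only [map_add, LinearMap.add_apply] at p1
      rw [hadj (m X Y) Y, hadj (m X Y) Z, hadj (m X Z) Y, hadj (m X Z) Z] at p1
      rw [hadj (m X Y) Y] at p2
      rw [hadj (m X Z) Z] at p3
      linear_combination (norm := module) p1 - p2 - p3
    exact sub_eq_zero.mp (hnondeg _ h0)
  constructor
  · rintro ⟨ha, hb⟩
    -- diagonal identity (I)
    have hI : ∀ Y : A, Δ (m Y Y) = m (N Y) Y + m Y (N Y) := by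
      intro Y
      apply two_smul_cancel'
      rw [← S Y, ha Y Y, hb Y]
      module
    constructor
    · intro X Y
      rw [h4 (N X) Y, hadj X (m Y Y), hcN]
      have e : Ns (m Y Y) = m (N Y) Y + m Y (N Y) - N (m Y Y) := by
        rw [← hI Y, hΔ]; simp only [LinearMap.add_apply]; abel
      rw [e]
    · intro X Y
      have hII := aToII ha X Y
      rw [h5 (N X) Y, hcN]
      have expand : B (m (N X) Y + m X (N Y) - N (m X Y)) Y
          = B (m (N X) Y) Y + B (m X (N Y)) Y - B (N (m X Y)) Y := by
        simp only [map_add, map_sub, LinearMap.add_apply, LinearMap.sub_apply]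
      rw [expand, hII]
      module
  · rintro ⟨hi, hii⟩
    have hII : ∀ X Y : A, B (m X (N Y)) Y = B (N (m X Y)) Y := by
      intro X Y
      have h1 := hii X Y
      rw [h5 (N X) Y, hcN] at h1
      have h2 := two_smul_cancel' h1
      simp only [map_add, map_sub, LinearMap.add_apply, LinearMap.sub_apply] at h2
      linear_combination (norm := module) -h2
    have hA := IIToA hII
    refine ⟨hA, ?_⟩
    intro Y
    have hI : Δ (m Y Y) = m (N Y) Y + m Y (N Y) := by
      have key : ∀ X : A, B X (Ns (m Y Y)) = B X (cN Y Y) := by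
        intro X
        have h2 : (2:ℝ) • B (N X) (m Y Y) = (2:ℝ) • B X (cN Y Y) := by
          rw [← h4 (N X) Y, hi X Y]
        have := two_smul_cancel' h2
        rwa [hadj] at this
      have h3 := Bcancel _ _ key
      rw [hcN] at h3
      rw [hΔ]
      simp only [LinearMap.add_apply]
      linear_combination (norm := module) h3
    have hS := S Y
    have ha' := hA Y Y
    rw [← hI] at hS
    linear_combination (norm := module) ha' - hS
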